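/- Consider a K-armed Copeland bandit problem (K ≥ 2) with no ties (p_{ij} ≠ 1/2 for i ≠ j), and let cpld(i) = #{j ≠ i : p_{ij} > 1/2}/(K−1) be the normalized Copeland score. Then there exists a universal constant c > 0 such that for every such problem, ∑_{i : cpld(i) < 1} 1/(1 − cpld(i)) ≤ c · K · log K. -/

import Mathlib

open scoped Classical
open Finset

namespace CopelandAux

variable {K : ℕ}

/-- number of arms beating i -/
noncomputable def Bdeg (p : Fin K → Fin K → ℝ) (i : Fin K) : ℕ :=
  (univ.filter fun j => j ≠ i ∧ 1 / 2 < p j i).card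

lemma dich {p : Fin K → Fin K → ℝ} (hp : ∀ i j, p i j + p j i = 1)
    (hne : ∀ i j, i ≠ j → p i j ≠ 1 / 2)
    {i j : Fin K} (h : i ≠ j) : 1 / 2 < p i j ↔ ¬ 1 / 2 < p j i := by
  have h1 := hp i j
  constructor
  · intro hlt hlt'; linarith
  · intro hle
    push_neg at hle
    rcases lt_or_eq_of_le hle with h' | h'
    · linarith
    · exact absurd h' (hne j i h.symm)

lemma count_le {p : Fin K → Fin K → ℝ} (hp : ∀ i j, p i j + p j i = 1)
    (hne : ∀ i j, i ≠ j → p i j ≠ 1 / 2) (d : ℕ) :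
    (univ.filter fun i : Fin K => Bdeg p i ≤ d).card ≤ 2 * d + 1 := by
  set S := univ.filter fun i : Fin K => Bdeg p i ≤ d with hS
  set A := S.offDiag.filter (fun q => 1 / 2 < p q.2 q.1) with hA
  have hAsub : A ⊆ S.offDiag := filter_subset _ _
  have himg : S.offDiag \ A = A.image Prod.swap := by
    ext q
    simp only [hA, mem_sdiff, mem_filter, mem_offDiag, mem_image, Prod.exists]
    constructor
    · rintro ⟨⟨h1, h2, h3⟩, h4⟩
      have h4' : ¬ 1 / 2 < p q.2 q.1 := fun hc => h4 ⟨⟨h1, h2, h3⟩, hc⟩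
      refine ⟨q.2, q.1, ⟨⟨h2, h1, h3.symm⟩, ?_⟩, rfl⟩
      exact (dich hp hne h3).mpr h4'
    · rintro ⟨a, b, ⟨⟨hb, ha, hba⟩, hpb⟩, rfl⟩
      refine ⟨⟨ha, hb, hba.symm⟩, ?_⟩
      rintro ⟨-, hc⟩
      exact ((dich hp hne hba).mp hc) hpb
  have hcard2 : S.offDiag.card = 2 * A.card := by
    have h0 := card_sdiff_add_card_eq_card hAsub
    rw [himg, card_image_of_injective _ Prod.swap_injective] at h0
    omega
  have hfiber : A.card ≤ S.card * d := by
    have h1 : A.card = ∑ i ∈ S, (A.filter (fun q => q.1 = i)).card := by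
      apply card_eq_sum_card_fiberwise
      intro q hq
      exact (mem_offDiag.mp (hAsub hq)).1
    rw [h1]
    calc ∑ i ∈ S, (A.filter (fun q => q.1 = i)).card
        ≤ ∑ _i ∈ S, d := by
          apply Finset.sum_le_sum
          intro i hi
          have hBd : Bdeg p i ≤ d := (mem_filter.mp hi).2
          refine le_trans ?_ hBd
          unfold Bdeg
          apply card_le_card_of_injOn (fun q => q.2)
          · intro q hq
            simp only [Finset.mem_coe, mem_filter] at hq ⊢
            obtain ⟨hqA, hq1⟩ := hq
            have hoff := mem_offDiag.mp (hAsub hqA)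
            have hpq := (mem_filter.mp hqA).2
            subst hq1
            exact ⟨mem_univ _, hoff.2.2.symm, hpq⟩
          · intro q hq q' hq' hqq
            have e1 : q.1 = q'.1 := by
              rw [(mem_filter.mp hq).2, (mem_filter.mp hq').2]
            exact Prod.ext e1 hqq
      _ = S.card * d := by rw [Finset.sum_const, smul_eq_mul]
  -- now conclude
  have hoff : S.offDiag.card = S.card * S.card - S.card := offDiag_card S
  rcases Nat.eq_zero_or_pos S.card with h0 | h0
  · omega
  · have hle : S.card ≤ S.card * S.card := Nat.le_mul_of_pos_left _ h0
    have : S.card * S.card ≤ S.card * (2 * d + 1) := by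
      have : S.card * S.card - S.card ≤ 2 * (S.card * d) := by omega
      calc S.card * S.card = (S.card * S.card - S.card) + S.card := by omega
        _ ≤ 2 * (S.card * d) + S.card := by omega
        _ = S.card * (2 * d + 1) := by ring
    exact Nat.le_of_mul_le_mul_left this h0

lemma telescope {b n : ℕ} (hb : b ≤ n) :
    (1 : ℝ) / b = 1 / n + ∑ d ∈ Ico b n, ((1 : ℝ) / d - 1 / (d + 1)) := by
  have hre : ∀ m : ℕ, ∑ d ∈ range m, ((1 : ℝ) / d - 1 / (d + 1))
      = (1 : ℝ) / (0 : ℕ) - 1 / m := by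
    intro m
    have := Finset.sum_range_sub' (fun d : ℕ => (1 : ℝ) / d) m
    rw [← this]
    apply Finset.sum_congr rfl
    intro d _
    push_cast
    ring
  rw [Finset.sum_Ico_eq_sub _ hb, hre, hre]
  norm_num


lemma harm (hK : 2 ≤ K) : ∑ d ∈ Ico 1 K, (1 : ℝ) / (d + 1) ≤ Real.log K := by
  have h1 : ∑ d ∈ range K, (1 : ℝ) / (d + 1)
      = 1 + ∑ d ∈ Ico 1 K, (1 : ℝ) / (d + 1) := by
    rw [Finset.range_eq_Ico, Finset.sum_eq_sum_Ico_succ_bot (by omega : 0 < K)]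
    norm_num
  have h2 : ((harmonic K : ℚ) : ℝ) = ∑ d ∈ range K, (1 : ℝ) / (d + 1) := by
    unfold harmonic
    push_cast
    apply Finset.sum_congr rfl
    intro d _
    rw [one_div]
  have h3 := harmonic_le_one_add_log K
  rw [h2, h1] at h3
  linarith

lemma core {p : Fin K → Fin K → ℝ} (hp : ∀ i j, p i j + p j i = 1)
    (hne : ∀ i j, i ≠ j → p i j ≠ 1 / 2) (hK : 2 ≤ K) :
    ∑ i ∈ univ.filter (fun i => 1 ≤ Bdeg p i), (1 : ℝ) / (Bdeg p i)
      ≤ 1 + 3 * Real.log K := by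
  set S₁ := univ.filter (fun i : Fin K => 1 ≤ Bdeg p i) with hS₁
  have hBle : ∀ i : Fin K, Bdeg p i ≤ K := by
    intro i
    calc Bdeg p i ≤ univ.card := card_filter_le _ _
      _ = K := by simp
  have hsplit : ∑ i ∈ S₁, (1 : ℝ) / (Bdeg p i)
      = ∑ i ∈ S₁, (1 : ℝ) / K
        + ∑ i ∈ S₁, ∑ d ∈ Ico (Bdeg p i) K, ((1 : ℝ) / d - 1 / (d + 1)) := by
    rw [← Finset.sum_add_distrib]
    apply Finset.sum_congr rfl
    intro i _
    exact telescope (hBle i)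
  have hfirst : ∑ i ∈ S₁, (1 : ℝ) / K ≤ 1 := by
    rw [Finset.sum_const, nsmul_eq_mul]
    have h1 : (S₁.card : ℝ) ≤ K := by
      have := card_filter_le (univ : Finset (Fin K)) (fun i => 1 ≤ Bdeg p i)
      simp only [card_univ, Fintype.card_fin] at this
      exact_mod_cast this
    have hK0 : (0 : ℝ) < K := by positivity
    calc (S₁.card : ℝ) * (1 / K) ≤ K * (1 / K) := by
          apply mul_le_mul_of_nonneg_right h1; positivity
      _ = 1 := by field_simp
  have hIco : ∀ i ∈ S₁, Ico (Bdeg p i) K = (Ico 1 K).filter (fun d => Bdeg p i ≤ d) := by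
    intro i hi
    have h1 : 1 ≤ Bdeg p i := (mem_filter.mp hi).2
    ext d
    simp only [mem_Ico, mem_filter]
    omega
  have hsecond : ∑ i ∈ S₁, ∑ d ∈ Ico (Bdeg p i) K, ((1 : ℝ) / d - 1 / (d + 1))
      ≤ 3 * Real.log K := by
    have e1 : ∑ i ∈ S₁, ∑ d ∈ Ico (Bdeg p i) K, ((1 : ℝ) / d - 1 / (d + 1))
        = ∑ d ∈ Ico 1 K, ∑ i ∈ S₁,
            (if Bdeg p i ≤ d then ((1 : ℝ) / d - 1 / (d + 1)) else 0) := by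
      rw [← Finset.sum_comm]
      apply Finset.sum_congr rfl
      intro i hi
      rw [hIco i hi, Finset.sum_filter]
    rw [e1]
    have e2 : ∀ d ∈ Ico 1 K, ∑ i ∈ S₁,
        (if Bdeg p i ≤ d then ((1 : ℝ) / d - 1 / (d + 1)) else 0)
        ≤ 3 / (d + 1) := by
      intro d hd
      have hd1 : 1 ≤ d := (mem_Ico.mp hd).1
      have hd1' : (1 : ℝ) ≤ d := by exact_mod_cast hd1
      have hdpos : (0 : ℝ) < d := by linarith
      have hh : (0 : ℝ) ≤ (1 : ℝ) / d - 1 / (d + 1) := by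
        rw [sub_nonneg]
        apply one_div_le_one_div_of_le hdpos
        linarith
      have e3 : ∑ i ∈ S₁, (if Bdeg p i ≤ d then ((1 : ℝ) / d - 1 / (d + 1)) else 0)
          = ((S₁.filter (fun i => Bdeg p i ≤ d)).card : ℝ) * ((1 : ℝ) / d - 1 / (d + 1)) := by
        rw [← Finset.sum_filter, Finset.sum_const, nsmul_eq_mul]
      rw [e3]
      have hcount : ((S₁.filter (fun i => Bdeg p i ≤ d)).card : ℝ) ≤ 2 * d + 1 := by
        have hsub : S₁.filter (fun i => Bdeg p i ≤ d)
            ⊆ univ.filter (fun i => Bdeg p i ≤ d) := by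
          apply Finset.filter_subset_filter
          exact Finset.filter_subset _ _
        have := le_trans (Finset.card_le_card hsub) (count_le hp hne d)
        calc ((S₁.filter (fun i => Bdeg p i ≤ d)).card : ℝ)
            ≤ ((2 * d + 1 : ℕ) : ℝ) := by exact_mod_cast this
          _ = 2 * d + 1 := by push_cast; ring
      calc ((S₁.filter (fun i => Bdeg p i ≤ d)).card : ℝ) * ((1 : ℝ) / d - 1 / (d + 1))
          ≤ (2 * (d : ℝ) + 1) * ((1 : ℝ) / d - 1 / (d + 1)) :=
            mul_le_mul_of_nonneg_right hcount hh
        _ ≤ 3 / (d + 1) := by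
            have e4 : (1 : ℝ) / d - 1 / (d + 1) = 1 / (d * (d + 1)) := by
              field_simp
              ring
            rw [e4, mul_one_div, div_le_div_iff₀ (by positivity) (by positivity)]
            nlinarith
    calc ∑ d ∈ Ico 1 K, ∑ i ∈ S₁,
          (if Bdeg p i ≤ d then ((1 : ℝ) / d - 1 / (d + 1)) else 0)
        ≤ ∑ d ∈ Ico 1 K, 3 / ((d : ℝ) + 1) := Finset.sum_le_sum e2
      _ = 3 * ∑ d ∈ Ico 1 K, (1 : ℝ) / (d + 1) := by
          rw [Finset.mul_sum]
          apply Finset.sum_congr rfl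
          intro d _
          ring
      _ ≤ 3 * Real.log K := by
          have := harm (K := K) hK
          linarith
  rw [hsplit]
  linarith

end CopelandAux

open Finset CopelandAux in
/-- There is a universal constant `c > 0` such that for every `K`-armed Copeland
bandit problem (`K ≥ 2`) with no ties,
`∑_{i : cpld i < 1} 1/(1 - cpld i) ≤ c K log K`, where `cpld` is the normalized
Copeland score. -/
theorem sum_inv_one_sub_cpld_le :
    ∃ c : ℝ, 0 < c ∧
      ∀ (K : ℕ), 2 ≤ K →
        ∀ p : Fin K → Fin K → ℝ,
          (∀ i j, p i j + p j i = 1) →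
          (∀ i j, i ≠ j → p i j ≠ 1 / 2) →
          ∑ i ∈ Finset.univ.filter (fun i : Fin K =>
              (Nat.card {j : Fin K // j ≠ i ∧ 1 / 2 < p i j} : ℝ) / (K - 1) < 1),
            1 / (1 - (Nat.card {j : Fin K // j ≠ i ∧ 1 / 2 < p i j} : ℝ) / (K - 1))
          ≤ c * K * Real.log K := by
  refine ⟨5, by norm_num, ?_⟩
  intro K hK p hp hne
  set W : Fin K → ℕ := fun i => (univ.filter fun j => j ≠ i ∧ 1 / 2 < p i j).card with hW
  have hNat : ∀ i : Fin K, Nat.card {j : Fin K // j ≠ i ∧ 1 / 2 < p i j} = W i := by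
    intro i
    rw [Nat.card_eq_fintype_card, Fintype.card_subtype]
  have hKr : (0 : ℝ) < (K : ℝ) - 1 := by
    have : (2 : ℝ) ≤ K := by exact_mod_cast hK
    linarith
  have hWB : ∀ i : Fin K, W i + Bdeg p i = K - 1 := by
    intro i
    have e3 := Finset.card_filter_add_card_filter_not
      (s := univ.filter (fun j : Fin K => j ≠ i)) (p := fun j => 1 / 2 < p i j)
    rw [Finset.filter_filter, Finset.filter_filter] at e3
    have e2 : (univ.filter fun j : Fin K => j ≠ i ∧ ¬ 1 / 2 < p i j)
        = univ.filter fun j : Fin K => j ≠ i ∧ 1 / 2 < p j i := by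
      apply Finset.filter_congr
      intro j _
      constructor
      · rintro ⟨h1, h2⟩; exact ⟨h1, (dich hp hne h1).mpr h2⟩
      · rintro ⟨h1, h2⟩; exact ⟨h1, (dich hp hne h1).mp h2⟩
    rw [e2] at e3
    have e4 : (univ.filter fun j : Fin K => j ≠ i).card = K - 1 := by
      rw [Finset.filter_ne', Finset.card_erase_of_mem (mem_univ i), card_univ,
        Fintype.card_fin]
    rw [e4] at e3
    exact e3
  have hcond : ∀ i : Fin K,
      ((Nat.card {j : Fin K // j ≠ i ∧ 1 / 2 < p i j} : ℝ) / ((K : ℝ) - 1) < 1)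
        ↔ 1 ≤ Bdeg p i := by
    intro i
    rw [hNat i, div_lt_one hKr]
    have hcast : ((K - 1 : ℕ) : ℝ) = (K : ℝ) - 1 := by
      push_cast [Nat.cast_sub (by omega : 1 ≤ K)]; ring
    rw [← hcast, Nat.cast_lt]
    have := hWB i
    omega
  have hset : Finset.univ.filter (fun i : Fin K =>
        (Nat.card {j : Fin K // j ≠ i ∧ 1 / 2 < p i j} : ℝ) / (K - 1) < 1)
      = univ.filter (fun i : Fin K => 1 ≤ Bdeg p i) := by
    apply Finset.filter_congr
    intro i _
    exact hcond i
  have hterm : ∀ i ∈ univ.filter (fun i : Fin K => 1 ≤ Bdeg p i),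
      1 / (1 - (Nat.card {j : Fin K // j ≠ i ∧ 1 / 2 < p i j} : ℝ) / ((K : ℝ) - 1))
        = ((K : ℝ) - 1) * ((1 : ℝ) / (Bdeg p i)) := by
    intro i hi
    have hB1 : 1 ≤ Bdeg p i := (mem_filter.mp hi).2
    have hBpos : (0 : ℝ) < (Bdeg p i : ℝ) := by exact_mod_cast hB1
    have hwb : (W i : ℝ) + (Bdeg p i : ℝ) = (K : ℝ) - 1 := by
      have := hWB i
      have : ((W i + Bdeg p i : ℕ) : ℝ) = ((K - 1 : ℕ) : ℝ) := by rw [this]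
      push_cast [Nat.cast_sub (by omega : 1 ≤ K)] at this
      linarith
    rw [hNat i]
    have e1 : 1 - (W i : ℝ) / ((K : ℝ) - 1) = (Bdeg p i : ℝ) / ((K : ℝ) - 1) := by
      field_simp
      linarith
    rw [e1, one_div_div, div_eq_mul_one_div]
  rw [hset, Finset.sum_congr rfl hterm, ← Finset.mul_sum]
  have hcore := core hp hne hK
  have hlog2 : (0.6931471803 : ℝ) < Real.log 2 := Real.log_two_gt_d9
  have h2K : (2 : ℝ) ≤ (K : ℝ) := by exact_mod_cast hK
  have hlogK : (1 : ℝ) / 2 ≤ Real.log K := by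
    have := Real.log_le_log (by norm_num) h2K
    linarith
  have hsum0 : (0 : ℝ) ≤ ∑ i ∈ univ.filter (fun i : Fin K => 1 ≤ Bdeg p i),
      (1 : ℝ) / (Bdeg p i) := by
    apply Finset.sum_nonneg
    intro i _
    positivity
  calc ((K : ℝ) - 1) * ∑ i ∈ univ.filter (fun i : Fin K => 1 ≤ Bdeg p i),
        (1 : ℝ) / (Bdeg p i)
      ≤ ((K : ℝ) - 1) * (1 + 3 * Real.log K) := by
        apply mul_le_mul_of_nonneg_left hcore (le_of_lt hKr)
    _ ≤ 5 * (K : ℝ) * Real.log K := by nlinarith
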